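/- arXiv:2208.00546 — 2 statements merged into one kernel-verified Lean document; each statement's English description precedes it below -/
import Mathlib

section
/- Let g(z) = e^{iθ} z^m with m ≥ 2 and fix p̂ = r e^{iθ₀} with 0 < r < 1. Then there exists a constant C₀ > 0 (depending only on r and m) such that for every z₀ in the open unit disk there exist k ≥ 0 and q in the open unit disk with g^k(q) = p̂ and ρ_Δ(z₀, q) ≤ C₀, where ρ_Δ denotes the Poincaré (hyperbolic) distance on the unit disk. -/
open Complex


lemma pms_normSq_identity (z w : ℂ) :
    Complex.normSq (1 - z * (starRingEnd ℂ) w) - Complex.normSq (z - w)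
      = (1 - Complex.normSq z) * (1 - Complex.normSq w) := by
  simp only [Complex.normSq_apply, Complex.sub_re, Complex.sub_im, Complex.mul_re, Complex.mul_im,
    Complex.one_re, Complex.one_im, Complex.conj_re, Complex.conj_im]
  ring

lemma pms_abs_exp_I_sub_one (x : ℝ) :
    ‖Complex.exp (x * Complex.I) - 1‖ ≤ |x| := by
  rw [Complex.norm_def, ← Real.sqrt_sq_eq_abs]
  apply Real.sqrt_le_sqrt
  have h1 : Complex.normSq (Complex.exp (x * Complex.I) - 1) = 2 - 2 * Real.cos x := by
    simp only [Complex.normSq_apply, Complex.sub_re, Complex.sub_im,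
      Complex.exp_ofReal_mul_I_re, Complex.exp_ofReal_mul_I_im, Complex.one_re, Complex.one_im]
    nlinarith [Real.sin_sq_add_cos_sq x]
  rw [h1]
  nlinarith [Real.one_sub_sq_div_two_le_cos (x := x)]

lemma pms_iterate_form (m : ℕ) (θ : ℝ) (g : ℂ → ℂ)
    (hg : ∀ z, g z = Complex.exp (θ * Complex.I) * z ^ m) (k : ℕ) :
    ∃ c : ℝ, ∀ z, g^[k] z = Complex.exp ((c : ℂ) * Complex.I) * z ^ (m ^ k) := by
  induction k with
  | zero => exact ⟨0, by simp⟩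
  | succ k ih =>
    obtain ⟨c, hc⟩ := ih
    refine ⟨θ + m * c, fun z => ?_⟩
    rw [Function.iterate_succ_apply', hc z, hg, mul_pow, ← Complex.exp_nat_mul]
    have h1 : ((θ + (m : ℝ) * c : ℝ) : ℂ) * Complex.I
        = (θ : ℂ) * Complex.I + (m : ℕ) * ((c : ℂ) * Complex.I) := by push_cast; ring
    rw [h1, Complex.exp_add, pow_succ, pow_mul]
    ring

lemma pms_log_ratio_mono {d c : ℝ} (hd0 : 0 ≤ d) (hdc : d ≤ c) (hc1 : c < 1) :
    Real.log ((1 + d) / (1 - d)) ≤ Real.log ((1 + c) / (1 - c)) := by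
  have h1 : 0 < 1 - c := by linarith
  have h2 : 0 < 1 - d := by linarith
  apply Real.log_le_log (by positivity)
  rw [div_le_div_iff₀ h2 h1]
  nlinarith

/-- The Poincaré (hyperbolic) distance on the unit disk, normalized so that
ρ(0,s) = log((1+s)/(1-s)). -/
noncomputable def poincareDist (z w : ℂ) : ℝ :=
  Real.log ((1 + ‖(z - w) / (1 - z * (starRingEnd ℂ) w)‖) /
    (1 - ‖(z - w) / (1 - z * (starRingEnd ℂ) w)‖))

set_option maxHeartbeats 2000000 in
/-- for g(z) = e^{iθ}z^m, m ≥ 2, and phat = r e^{iθ₀} with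
0 < r < 1, there is C₀ > 0 such that every point of the unit disk is within
Poincaré distance C₀ of some iterated preimage of phat. -/
theorem power_map_preimages_shadowing
    (m : ℕ) (hm : 2 ≤ m) (θ θ₀ r : ℝ) (hr0 : 0 < r) (hr1 : r < 1)
    (g : ℂ → ℂ) (hg : ∀ z, g z = Complex.exp (θ * Complex.I) * z ^ m)
    (phat : ℂ) (hp : phat = (r : ℂ) * Complex.exp (θ₀ * Complex.I)) :
    ∃ C₀ > 0, ∀ z₀ : ℂ, ‖z₀‖ < 1 →
      ∃ (k : ℕ) (q : ℂ), ‖q‖ < 1 ∧ g^[k] q = phat ∧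
        poincareDist z₀ q ≤ C₀ := by
  have hm0 : 0 < m := by omega
  have hlogr : Real.log r < 0 := Real.log_neg hr0 hr1
  set L : ℝ := -Real.log r with hLdef
  have hL0 : 0 < L := by rw [hLdef]; linarith
  set B₁ : ℝ := L + max (L * m) 1 with hB₁def
  have hB₁1 : 1 ≤ max (L * (m:ℝ)) 1 := le_max_right _ _
  have hB₁pos : 0 < B₁ := by rw [hB₁def]; linarith
  set Kc : ℝ := ((B₁ + 4) * (1 + L) / L) ^ 2 with hKcdef
  have hKc1 : 1 < Kc := by
    have h1 : 1 < (B₁ + 4) * (1 + L) / L := by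
      rw [lt_div_iff₀ hL0]
      nlinarith only [hB₁pos, hL0, mul_pos hB₁pos hL0]
    rw [hKcdef]
    exact one_lt_pow₀ h1 (by norm_num)
  have hKc0 : 0 < Kc := by linarith
  have hcsq : (0:ℝ) ≤ 1 - 1 / Kc := by
    have : 1 / Kc ≤ 1 := by rw [div_le_one hKc0]; linarith
    linarith
  set c : ℝ := Real.sqrt (1 - 1 / Kc) with hcdef
  have hc0 : 0 ≤ c := Real.sqrt_nonneg _
  have hc1 : c < 1 := by
    have h2 : c ^ 2 = 1 - 1 / Kc := Real.sq_sqrt hcsq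
    linarith only [h2, one_div_pos.mpr hKc0, sq_nonneg (1 - c)]
  have hlog0 : 0 ≤ Real.log ((1 + c) / (1 - c)) := by
    apply Real.log_nonneg
    rw [le_div_iff₀ (by linarith)]
    linarith
  refine ⟨Real.log ((1 + c) / (1 - c)) + 1, by linarith only [hlog0], fun z₀ hz₀ => ?_⟩
  set s : ℝ := ‖z₀‖ with hsdef
  have hs0 : 0 ≤ s := norm_nonneg _
  have hs1 : s < 1 := hz₀
  -- existence of k with s ^ (m ^ k) ≤ r
  have hex : ∃ k : ℕ, s ^ m ^ k ≤ r := by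
    rcases le_or_gt s r with h | h
    · exact ⟨0, by simpa using h⟩
    · obtain ⟨n, hn⟩ := exists_pow_lt_of_lt_one hr0 hs1
      refine ⟨n, le_trans ?_ hn.le⟩
      exact pow_le_pow_of_le_one hs0 hs1.le (Nat.le_of_lt (Nat.lt_pow_self (n := n) (a := m) (by omega)))
  obtain ⟨k, hks, hkmin⟩ : ∃ k, s ^ m ^ k ≤ r ∧ ∀ i < k, ¬ s ^ m ^ i ≤ r :=
    ⟨Nat.find hex, Nat.find_spec hex, fun i hi => Nat.find_min hex hi⟩
  set M : ℕ := m ^ k with hMdef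
  have hM1 : 1 ≤ M := Nat.one_le_pow _ _ hm0
  have hM0 : (0:ℝ) < M := by exact_mod_cast Nat.lt_of_lt_of_le Nat.zero_lt_one hM1
  have hMne : (M:ℝ) ≠ 0 := ne_of_gt hM0
  set t : ℝ := r ^ ((M:ℝ)⁻¹) with htdef
  have ht0 : 0 < t := Real.rpow_pos_of_pos hr0 _
  have ht1 : t < 1 := Real.rpow_lt_one hr0.le hr1 (by positivity)
  have ht_exp : t = Real.exp (-(L / M)) := by
    rw [htdef, Real.rpow_def_of_pos hr0]
    congr 1
    rw [hLdef]
    field_simp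
  have hst : s ≤ t := by
    have h1 : (s ^ M : ℝ) ^ ((M:ℝ)⁻¹) ≤ r ^ ((M:ℝ)⁻¹) :=
      Real.rpow_le_rpow (pow_nonneg hs0 M) hks (by positivity)
    calc s = (s ^ M : ℝ) ^ ((M:ℝ)⁻¹) := by
            rw [← Real.rpow_natCast s M, ← Real.rpow_mul hs0, mul_inv_cancel₀ hMne,
              Real.rpow_one]
      _ ≤ t := h1
  -- lower bound on 1 - t
  have hBlow : L / ((1 + L) * M) ≤ 1 - t := by
    have h1 : t ≤ (1 + L / M)⁻¹ := by
      rw [ht_exp, Real.exp_neg]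
      apply inv_anti₀ (by positivity)
      linarith only [Real.add_one_le_exp (L / (M:ℝ))]
    have h2 : (1 + L / (M:ℝ))⁻¹ = M / (M + L) := by
      rw [inv_eq_one_div]
      field_simp
    have h3 : (M:ℝ) / (M + L) + L / (M + L) = 1 := by field_simp
    have h4 : L / ((1 + L) * M) ≤ L / (M + L) := by
      rw [div_le_div_iff₀ (by positivity) (by positivity)]
      have hM1' : (1:ℝ) ≤ M := by exact_mod_cast hM1
      linarith only [mul_le_mul_of_nonneg_left hM1' (mul_nonneg hL0.le hL0.le)]
    rw [h2] at h1
    linarith only [h1, h3, h4]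
  have htup : 1 - t ≤ L / M := by
    rw [ht_exp]
    linarith only [Real.add_one_le_exp (-(L / (M:ℝ)))]
  -- upper bound on 1 - s
  have hsup : 1 - s ≤ max (L * m) 1 / M := by
    rcases Nat.eq_zero_or_pos k with hk0 | hkpos
    · have hMeq : (M:ℝ) = 1 := by rw [hMdef, hk0, pow_zero]; norm_num
      rw [hMeq, div_one]
      linarith only [hB₁1, hs0]
    · set M' : ℕ := m ^ (k - 1) with hM'def
      have hMM' : M = M' * m := by
        rw [hMdef, hM'def, ← pow_succ]
        congr 1
        omega
      have hM'1 : 1 ≤ M' := Nat.one_le_pow _ _ hm0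
      have hM'0 : (0:ℝ) < M' := by exact_mod_cast Nat.lt_of_lt_of_le Nat.zero_lt_one hM'1
      have hmin : ¬ s ^ m ^ (k - 1) ≤ r := hkmin _ (by omega)
      have h1 : r ≤ s ^ M' := by
        rw [hM'def]
        exact (lt_of_not_ge hmin).le
      have h2 : r ^ ((M':ℝ)⁻¹) ≤ s := by
        calc r ^ ((M':ℝ)⁻¹) ≤ (s ^ M') ^ ((M':ℝ)⁻¹) :=
              Real.rpow_le_rpow hr0.le h1 (by positivity)
          _ = s := by
              rw [← Real.rpow_natCast s M', ← Real.rpow_mul hs0,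
                mul_inv_cancel₀ (ne_of_gt hM'0), Real.rpow_one]
      have h3 : r ^ ((M':ℝ)⁻¹) = Real.exp (-(L * m / M)) := by
        rw [Real.rpow_def_of_pos hr0]
        congr 1
        have hMr : (M:ℝ) = (M':ℝ) * m := by rw [hMM']; push_cast; ring
        rw [hLdef, hMr]
        have hmne : (m:ℝ) ≠ 0 := by positivity
        field_simp
      have h4 : 1 - s ≤ L * m / M := by
        rw [h3] at h2
        linarith only [h2, Real.add_one_le_exp (-(L * (m:ℝ) / M))]
      calc 1 - s ≤ L * m / M := h4
        _ ≤ max (L * m) 1 / M := by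
            gcongr
            exact le_max_left _ _
  -- construction of the preimage q
  obtain ⟨cθ, hcθ⟩ := pms_iterate_form m θ g hg k
  rw [show m ^ k = M from hMdef.symm] at hcθ
  set ψ : ℝ := θ₀ - cθ with hψdef
  set α : ℝ := Complex.arg z₀ with hαdef
  obtain ⟨j, hjr⟩ : ∃ j : ℤ, |((M:ℝ) * α - ψ) / (2 * Real.pi) - j| ≤ 1/2 :=
    ⟨round (((M:ℝ) * α - ψ) / (2 * Real.pi)), abs_sub_round _⟩
  set γ : ℝ := (ψ + 2 * Real.pi * j) / M with hγdef
  set q : ℂ := (t : ℂ) * Complex.exp ((γ : ℂ) * Complex.I) with hqdef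
  have habsq : ‖q‖ = t := by
    rw [hqdef, norm_mul, Complex.norm_real, Real.norm_eq_abs, Complex.norm_exp_ofReal_mul_I, mul_one,
      abs_of_pos ht0]
  have hMC : (M : ℂ) ≠ 0 := by exact_mod_cast hMne
  have hiter : g^[k] q = phat := by
    rw [hcθ q, hp]
    have hqM : q ^ M = (r : ℂ) * Complex.exp ((ψ : ℂ) * Complex.I) := by
      rw [hqdef, mul_pow, ← Complex.exp_nat_mul]
      have h1 : ((t : ℂ)) ^ M = (r : ℂ) := by
        have ht : t ^ M = r := by
          rw [htdef, ← Real.rpow_natCast (r ^ ((M:ℝ)⁻¹)) M, ← Real.rpow_mul hr0.le,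
            inv_mul_cancel₀ hMne, Real.rpow_one]
        rw [← ht]
        push_cast
        ring
      have h2 : (M : ℂ) * ((γ : ℂ) * Complex.I)
          = (ψ : ℂ) * Complex.I + (j : ℂ) * (2 * (Real.pi : ℂ) * Complex.I) := by
        rw [hγdef]
        push_cast
        field_simp
      rw [h1, h2, Complex.exp_add, Complex.exp_int_mul_two_pi_mul_I, mul_one]
    rw [hqM]
    have h3 : (cθ : ℂ) * Complex.I + (ψ : ℂ) * Complex.I = (θ₀ : ℂ) * Complex.I := by
      rw [hψdef]; push_cast; ring
    calc Complex.exp ((cθ:ℂ) * Complex.I) * ((r:ℂ) * Complex.exp ((ψ:ℂ) * Complex.I))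
        = (r:ℂ) * (Complex.exp ((cθ:ℂ) * Complex.I) * Complex.exp ((ψ:ℂ) * Complex.I)) := by
          ring
      _ = (r:ℂ) * Complex.exp ((cθ:ℂ) * Complex.I + (ψ:ℂ) * Complex.I) := by
          rw [Complex.exp_add]
      _ = (r:ℂ) * Complex.exp ((θ₀:ℂ) * Complex.I) := by rw [h3]
  -- angle bound
  have hangle : |α - γ| ≤ 4 / M := by
    have hπ : 0 < Real.pi := Real.pi_pos
    have h1 : α - γ = 2 * Real.pi * (((M:ℝ) * α - ψ) / (2 * Real.pi) - j) / M := by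
      rw [hγdef]
      field_simp
      ring
    rw [h1, abs_div, abs_of_pos hM0, abs_mul, abs_of_pos (by linarith : (0:ℝ) < 2 * Real.pi)]
    have h4 : 2 * Real.pi * |(((M:ℝ) * α - ψ) / (2 * Real.pi) - j)| ≤ 4 := by
      have h5 := mul_le_mul_of_nonneg_left hjr (by positivity : (0:ℝ) ≤ 2 * Real.pi)
      linarith only [h5, Real.pi_le_four]
    exact div_le_div₀ (by norm_num) h4 hM0 le_rfl
  refine ⟨k, q, by rw [habsq]; exact ht1, hiter, ?_⟩
  unfold poincareDist
  set u : ℂ := 1 - z₀ * (starRingEnd ℂ) q with hudef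
  set d : ℝ := ‖(z₀ - q) / u‖ with hddef
  clear_value u d
  clear hex
  have hd0 : 0 ≤ d := hddef ▸ norm_nonneg _
  have hst1 : s * t < 1 := (mul_lt_of_lt_one_left ht0 hs1).trans ht1
  -- express u
  have hzeq : z₀ = (s : ℂ) * Complex.exp ((α:ℂ) * Complex.I) :=
    (Complex.norm_mul_exp_arg_mul_I z₀).symm
  have hconjq : (starRingEnd ℂ) q = (t : ℂ) * Complex.exp (((-γ : ℝ) : ℂ) * Complex.I) := by
    rw [hqdef, map_mul, Complex.conj_ofReal, ← Complex.exp_conj, map_mul, Complex.conj_ofReal,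
      Complex.conj_I]
    push_cast
    ring_nf
  have hu1 : u = 1 - ((s * t : ℝ) : ℂ) * Complex.exp (((α - γ : ℝ) : ℂ) * Complex.I) := by
    rw [hudef, hzeq, hconjq]
    congr 1
    rw [mul_mul_mul_comm, ← Complex.exp_add]
    push_cast
    ring_nf
  -- bound |u|
  have habsu : ‖u‖ ≤ (1 - s * t) + |α - γ| := by
    have hu2 : u = ((1 - s * t : ℝ) : ℂ)
        + ((s * t : ℝ) : ℂ) * (1 - Complex.exp (((α - γ : ℝ) : ℂ) * Complex.I)) := by
      rw [hu1]
      push_cast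
      ring
    calc ‖u‖
        ≤ ‖(( 1 - s * t : ℝ) : ℂ)‖
          + ‖((s * t : ℝ) : ℂ) * (1 - Complex.exp (((α - γ : ℝ) : ℂ) * Complex.I))‖ := by
          rw [hu2]; exact norm_add_le _ _
      _ ≤ (1 - s * t) + (s * t) * |α - γ| := by
          rw [norm_mul, Complex.norm_real, Complex.norm_real, Real.norm_eq_abs, Real.norm_eq_abs,
            _root_.abs_of_nonneg (by linarith only [hst1] : (0:ℝ) ≤ 1 - s * t),
            _root_.abs_of_nonneg (by positivity : (0:ℝ) ≤ s * t)]
          gcongr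
          rw [norm_sub_rev]
          exact pms_abs_exp_I_sub_one (α - γ)
      _ ≤ (1 - s * t) + 1 * |α - γ| := by
          gcongr
      _ = (1 - s * t) + |α - γ| := by ring
  have hA : ‖u‖ ≤ (B₁ + 4) / M := by
    have h5 : 1 - s * t ≤ B₁ / M := by
      have h6 : 1 - s * t ≤ (1 - s) + (1 - t) := by
        nlinarith only [mul_nonneg (by linarith only [hs1] : (0:ℝ) ≤ 1 - s)
          (by linarith only [ht1] : (0:ℝ) ≤ 1 - t)]
      rw [hB₁def, add_div]
      linarith only [h6, hsup, htup]
    calc ‖u‖ ≤ (1 - s * t) + |α - γ| := habsu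
      _ ≤ B₁ / M + 4 / M := by linarith only [habsu, h5, hangle]
      _ = (B₁ + 4) / M := by rw [← add_div]
  have hNle : Complex.normSq u ≤ ((B₁ + 4) / M) ^ 2 := by
    rw [← Complex.sq_norm]
    exact pow_le_pow_left₀ (norm_nonneg _) hA 2
  have hu0 : u ≠ 0 := by
    intro h
    have h1 : z₀ * (starRingEnd ℂ) q = 1 := by
      have h2 : (1 : ℂ) - z₀ * (starRingEnd ℂ) q = 0 := by rw [← hudef, h]
      have := sub_eq_zero.mp h2
      exact this.symm
    have h3 : ‖z₀ * (starRingEnd ℂ) q‖ = 1 := by rw [h1, norm_one]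
    rw [norm_mul, Complex.norm_conj, habsq, ← hsdef] at h3
    linarith only [h3, hst1]
  have hN0 : 0 < Complex.normSq u := Complex.normSq_pos.mpr hu0
  have hP : (L / ((1 + L) * M)) ^ 2 ≤ (1 - Complex.normSq z₀) * (1 - Complex.normSq q) := by
    rw [← Complex.sq_norm, ← Complex.sq_norm, habsq, ← hsdef]
    have hB0 : 0 ≤ L / ((1 + L) * M) := by positivity
    have ha : 1 - t ≤ 1 - s ^ 2 := by
      nlinarith only [mul_le_mul_of_nonneg_right hs1.le hs0, hst]
    have hb : 1 - t ≤ 1 - t ^ 2 := by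
      nlinarith only [mul_le_mul_of_nonneg_right ht1.le ht0.le]
    have h2 : (1 - t) * (1 - t) ≤ (1 - s ^ 2) * (1 - t ^ 2) :=
      mul_le_mul ha hb (by linarith only [ht1]) (by linarith only [ha, ht1])
    nlinarith only [pow_le_pow_left₀ hB0 hBlow 2, h2]
  have hfrac : 1 / Kc ≤ (1 - Complex.normSq z₀) * (1 - Complex.normSq q) / Complex.normSq u := by
    have hB₁4 : (0:ℝ) < B₁ + 4 := by linarith only [hB₁pos]
    have heq : (L / ((1 + L) * M)) ^ 2 / ((B₁ + 4) / M) ^ 2 = 1 / Kc := by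
      rw [hKcdef, one_div, ← inv_pow, ← div_pow]
      congr 1
      field_simp
    rw [← heq]
    exact div_le_div₀ (le_trans (by positivity) hP) hP hN0 hNle
  have hd2 : d ^ 2 ≤ 1 - 1 / Kc := by
    have hdq : d ^ 2 = Complex.normSq (z₀ - q) / Complex.normSq u := by
      rw [hddef, norm_div, div_pow, Complex.sq_norm, Complex.sq_norm]
    have hid := pms_normSq_identity z₀ q
    rw [← hudef] at hid
    have h6 : Complex.normSq (z₀ - q)
        = Complex.normSq u - (1 - Complex.normSq z₀) * (1 - Complex.normSq q) := by
      linarith only [hid]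
    rw [hdq, h6, sub_div, div_self (ne_of_gt hN0)]
    linarith only [hfrac]
  have hdc : d ≤ c := by
    rw [hcdef]
    exact Real.le_sqrt_of_sq_le hd2
  have hfin := pms_log_ratio_mono hd0 hdc hc1
  linarith only [hfin]
end

section
/- Suppose f is a polynomial of degree N ≥ 2 with an attracting fixed point p, and the basin of attraction A(p) = {z : f^n(z) → p} is not connected. Then A(p) has infinitely many connected components. -/
open Complex Filter

/-- if the basin of attraction of an attracting fixed point of a
polynomial of degree ≥ 2 is not connected, then it has infinitely many
connected components. -/
theorem basin_infinitely_many_components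
    (f : Polynomial ℂ) (N : ℕ) (hN : 2 ≤ N) (hdeg : f.natDegree = N)
    (p : ℂ) (hfix : f.eval p = p)
    (hattr : ‖(Polynomial.derivative f).eval p‖ < 1)
    (A : Set ℂ)
    (hA : A = {z : ℂ | Tendsto (fun n => (fun w => f.eval w)^[n] z) atTop (nhds p)})
    (hdisconn : ¬ IsPreconnected A) :
    {C : Set ℂ | ∃ z ∈ A, C = connectedComponentIn A z}.Infinite := by
  set F : ℂ → ℂ := fun w => f.eval w with hFdef
  have hFcont : Continuous F := f.continuous
  have hFp : F p = p := hfix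
  -- abbreviations
  set a : ℝ := ‖(Polynomial.derivative f).eval p‖ with ha
  have ha0 : 0 ≤ a := norm_nonneg _
  set c : ℝ := (a + 1) / 2 with hc
  have hc1 : c < 1 := by rw [hc]; linarith
  have hc0 : 0 ≤ c := by rw [hc]; linarith
  have hε : (0:ℝ) < (1 - a) / 2 := by linarith
  -- contraction near p
  have hder : HasDerivAt F ((Polynomial.derivative f).eval p) p := f.hasDerivAt p
  have hlo := (hasDerivAt_iff_isLittleO.mp hder).def hε
  have key : ∀ᶠ x in nhds p, dist (F x) p ≤ c * dist x p := by
    filter_upwards [hlo] with x hx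
    rw [dist_eq_norm, dist_eq_norm]
    have h1 : F x - p = (F x - F p - (x - p) • ((Polynomial.derivative f).eval p))
        + (x - p) • ((Polynomial.derivative f).eval p) := by rw [hFp]; ring
    calc ‖F x - p‖ ≤ ‖F x - F p - (x - p) • ((Polynomial.derivative f).eval p)‖
          + ‖(x - p) • ((Polynomial.derivative f).eval p)‖ := by
            rw [h1]; exact norm_add_le _ _
      _ ≤ (1 - a) / 2 * ‖x - p‖ + ‖x - p‖ * a := by
          have h2 : ‖(x - p) • ((Polynomial.derivative f).eval p)‖ = ‖x - p‖ * a := by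
            simp [norm_smul, ha]
          rw [h2]
          gcongr
      _ = c * ‖x - p‖ := by rw [hc]; ring
  obtain ⟨δ, hδ0, hball⟩ := Metric.eventually_nhds_iff.mp key
  -- the ball is invariant and iterates contract
  have hiter : ∀ x, dist x p < δ → ∀ n : ℕ, dist (F^[n] x) p ≤ c ^ n * dist x p := by
    intro x hx n
    induction n with
    | zero => simp
    | succ n ih =>
      have hin : dist (F^[n] x) p < δ :=
        lt_of_le_of_lt (ih.trans (mul_le_of_le_one_left dist_nonneg
          (pow_le_one₀ hc0 hc1.le))) hx
      rw [Function.iterate_succ_apply']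
      calc dist (F (F^[n] x)) p ≤ c * dist (F^[n] x) p := hball hin
        _ ≤ c * (c ^ n * dist x p) := by gcongr
        _ = c ^ (n + 1) * dist x p := by ring
  -- the ball is contained in A
  have hballA : Metric.ball p δ ⊆ A := by
    intro x hx
    rw [hA]
    rw [Metric.mem_ball] at hx
    have : Tendsto (fun n : ℕ => c ^ n * dist x p) atTop (nhds 0) := by
      simpa using (tendsto_pow_atTop_nhds_zero_of_lt_one hc0 hc1).mul_const (dist x p)
    refine (tendsto_iff_dist_tendsto_zero).mpr ?_
    exact squeeze_zero (fun n => dist_nonneg) (fun n => hiter x hx n) this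
  have hpA : p ∈ A := hballA (Metric.mem_ball_self hδ0)
  -- A is backward and forward invariant
  have hshift : ∀ z : ℂ, z ∈ A ↔ F z ∈ A := by
    intro z
    rw [hA]
    simp only [Set.mem_setOf_eq]
    have heq : (fun n : ℕ => F^[n] (F z)) = fun n : ℕ => F^[n + 1] z := by
      funext n; rw [Function.iterate_succ_apply]
    rw [heq]
    exact (tendsto_add_atTop_iff_nat 1).symm
  -- eventual entry into the ball
  have hentry : ∀ z ∈ A, ∀ᶠ n in atTop, F^[n] z ∈ Metric.ball p δ := by
    intro z hz
    rw [hA] at hz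
    exact hz (Metric.ball_mem_nhds p hδ0)
  -- surjectivity of F
  have hsurj : ∀ w : ℂ, ∃ x : ℂ, F x = w := by
    intro w
    have hne : f - Polynomial.C w ≠ 0 := by
      intro h
      have : (f - Polynomial.C w).natDegree = N := by rw [Polynomial.natDegree_sub_C, hdeg]
      rw [h] at this
      simp at this
      omega
    have hdeg' : (f - Polynomial.C w).degree ≠ 0 := by
      have : 0 < (f - Polynomial.C w).natDegree := by
        rw [Polynomial.natDegree_sub_C, hdeg]; omega
      exact (Polynomial.natDegree_pos_iff_degree_pos.mp this).ne'
    obtain ⟨x, hx⟩ := Complex.isAlgClosed.exists_root _ hdeg'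
    refine ⟨x, ?_⟩
    have := hx
    rw [Polynomial.IsRoot, Polynomial.eval_sub, Polynomial.eval_C, sub_eq_zero] at this
    exact this
  choose g hg using hsurj
  -- a point in A outside the component of p
  have hz0 : ∃ z₀ ∈ A, connectedComponentIn A z₀ ≠ connectedComponentIn A p := by
    by_contra h
    push_neg at h
    apply hdisconn
    have hAeq : A = connectedComponentIn A p := by
      apply subset_antisymm
      · intro z hz
        have := mem_connectedComponentIn hz
        rwa [h z hz] at this
      · exact connectedComponentIn_subset A p
    rw [hAeq]
    exact isPreconnected_connectedComponentIn
  obtain ⟨z₀, hz₀A, hz₀ne⟩ := hz0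
  -- backward orbit
  set z : ℕ → ℂ := fun n => g^[n] z₀ with hz
  have hz0eq : z 0 = z₀ := rfl
  have hzrec : ∀ n, F (z (n + 1)) = z n := by
    intro n
    show F (g^[n + 1] z₀) = g^[n] z₀
    rw [Function.iterate_succ_apply', hg]
  have hzA : ∀ n, z n ∈ A := by
    intro n
    induction n with
    | zero => exact hz₀A
    | succ n ih =>
      rw [hshift, hzrec]
      exact ih
  set Ω : ℕ → Set ℂ := fun n => connectedComponentIn A (z n) with hΩ
  -- F maps Ω (n+1) into Ω n
  have hmap : ∀ n, F '' Ω (n + 1) ⊆ Ω n := by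
    intro n
    apply IsPreconnected.subset_connectedComponentIn
    · exact (isPreconnected_connectedComponentIn).image F hFcont.continuousOn
    · exact ⟨z (n + 1), mem_connectedComponentIn (hzA (n + 1)), hzrec n⟩
    · rintro - ⟨x, hx, rfl⟩
      rw [← hshift]
      exact connectedComponentIn_subset A _ hx
  -- iterated: F^[k] maps Ω (n+k) into Ω n
  have hmapk : ∀ k n, F^[k] '' Ω (n + k) ⊆ Ω n := by
    intro k
    induction k with
    | zero => intro n; simp
    | succ k ih =>
      intro n
      rintro - ⟨x, hx, rfl⟩
      rw [Function.iterate_succ_apply']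
      apply hmap n
      refine ⟨F^[k] x, ?_, rfl⟩
      have : F^[k] '' Ω (n + 1 + k) ⊆ Ω (n + 1) := ih (n + 1)
      apply this
      refine ⟨x, ?_, rfl⟩
      have : n + (k + 1) = n + 1 + k := by omega
      rwa [this] at hx
  -- components in the chain are never the component of p
  have hne : ∀ n, Ω n ≠ connectedComponentIn A p := by
    intro n
    induction n with
    | zero => exact hz₀ne
    | succ n ih =>
      intro h
      apply ih
      have hpΩ : p ∈ Ω (n + 1) := by
        rw [h]; exact mem_connectedComponentIn hpA
      have hpΩn : p ∈ Ω n := by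
        have := hmap n ⟨p, hpΩ, rfl⟩
        rwa [hFp] at this
      exact connectedComponentIn_eq hpΩn
  -- ball is inside the component of p
  have hballΩp : Metric.ball p δ ⊆ connectedComponentIn A p := by
    apply IsPreconnected.subset_connectedComponentIn
    · exact (convex_ball p δ).isPreconnected
    · exact Metric.mem_ball_self hδ0
    · exact hballA
  -- Ω is injective
  have hΩinj : Function.Injective Ω := by
    have haux : ∀ j k : ℕ, j < k → Ω j = Ω k → False := by
      intro j k hjk heq
      set d : ℕ := k - j with hd
      have hd0 : 0 < d := by omega
      have hkd : j + d = k := by omega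
      have hstep : F^[d] '' Ω k ⊆ Ω k := by
        have h := hmapk d j
        rw [hkd, heq] at h
        exact h
      have horbit : ∀ m : ℕ, F^[m * d] (z k) ∈ Ω k := by
        intro m
        induction m with
        | zero => simpa using mem_connectedComponentIn (hzA k)
        | succ m ih =>
          have : (m + 1) * d = d + m * d := by ring
          rw [this, Function.iterate_add_apply]
          exact hstep ⟨F^[m * d] (z k), ih, rfl⟩
      obtain ⟨n₀, hn₀⟩ := (hentry (z k) (hzA k)).exists_forall_of_atTop
      have hmem : F^[n₀ * d] (z k) ∈ Metric.ball p δ := by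
        apply hn₀
        calc n₀ ≤ n₀ * 1 := by omega
          _ ≤ n₀ * d := by exact Nat.mul_le_mul_left n₀ hd0
      have h1 : F^[n₀ * d] (z k) ∈ connectedComponentIn A p := hballΩp hmem
      have h2 : F^[n₀ * d] (z k) ∈ Ω k := horbit n₀
      apply hne k
      calc Ω k = connectedComponentIn A (F^[n₀ * d] (z k)) := connectedComponentIn_eq h2
        _ = connectedComponentIn A p := (connectedComponentIn_eq h1).symm
    intro j k h
    rcases lt_trichotomy j k with hlt | heq | hgt
    · exact absurd h (fun h' => haux j k hlt h')
    · exact heq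
    · exact absurd h.symm (fun h' => haux k j hgt h')
  -- conclude
  apply Set.infinite_of_injective_forall_mem hΩinj
  intro n
  exact ⟨z n, hzA n, rfl⟩
end
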